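/- Let G be a simple graph and let W be a closed walk in G that traverses some edge of G an odd number of times. Then G contains a cycle whose length is at most the length of W. In particular, if G has girth at least ℓ, then every closed walk in G of length less than ℓ traverses each edge of G an even number of times. -/

import Mathlib

open SimpleGraph Walk

private lemma aux_path_edge {V : Type*} {G : SimpleGraph V} {v u : V}
    (p : G.Walk v u) (hp : p.IsPath) (he : s(u, v) ∈ p.edges) : p.length = 1 := by
  cases p with
  | nil => simp at he
  | @cons _ b _ h q =>
    have hadj : G.Adj u v := Walk.adj_of_mem_edges _ he
    rw [Walk.edges_cons, List.mem_cons] at he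
    rcases he with he | he
    · -- s(u,v) = s(v,b); since u ≠ v, we get u = b
      rw [Sym2.eq_iff] at he
      rcases he with ⟨h1, h2⟩ | ⟨h1, _⟩
      · exact absurd h1 hadj.ne
      · subst h1
        -- q : Walk u u is a path, hence nil
        cases q with
        | nil => simp
        | cons h' r =>
          exfalso
          have hq : (Walk.cons h' r).IsPath := hp.of_cons
          have : u ∈ r.support := r.end_mem_support
          have hnd := hq.support_nodup
          rw [Walk.support_cons] at hnd
          exact (List.nodup_cons.mp hnd).1 this
    · exfalso
      have : v ∈ q.support := Walk.snd_mem_support_of_mem_edges q he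
      have hnd := hp.support_nodup
      rw [Walk.support_cons] at hnd
      exact (List.nodup_cons.mp hnd).1 this

private lemma aux_key {V : Type*} [DecidableEq V] {G : SimpleGraph V} :
    ∀ n (u : V) (w : G.Walk u u), w.length ≤ n → ∀ e : Sym2 V, Odd (w.edges.count e) →
      ∃ (v : V) (c : G.Walk v v), c.IsCycle ∧ c.length ≤ w.length := by
  intro n
  induction n with
  | zero =>
    intro u w hw e he
    have h0 : w.edges.length = 0 := by rw [w.length_edges]; omega
    rw [List.length_eq_zero_iff] at h0
    rw [h0] at he
    simp at he
  | succ n ih =>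
    intro u w hw e he
    have hene : e ∈ w.edges := by
      rw [← List.count_pos_iff]
      rcases he with ⟨k, hk⟩
      omega
    by_cases hnd : w.support.tail.Nodup
    · -- no repeated interior vertex: w is (essentially) a cycle
      cases w with
      | nil => simp at hene
      | @cons _ b _ h p =>
        have hpath : p.IsPath := by
          rw [Walk.isPath_def]
          rwa [Walk.support_cons, List.tail_cons] at hnd
        by_cases hs : s(u, b) ∈ p.edges
        · -- then p has length 1 and the walk is u-b-u, every edge count even
          exfalso
          have hlen : p.length = 1 := aux_path_edge p hpath hs
          cases p with
          | nil => simp at hlen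
          | cons h' r =>
            cases r with
            | nil =>
              have hedges : (Walk.cons h (Walk.cons h' Walk.nil)).edges
                  = [s(u, b), s(b, u)] := by simp
              have heq : s(u, b) = s(b, u) := Sym2.eq_swap
              rw [hedges, heq] at he
              by_cases hbe : s(b, u) = e <;>
                simp [List.count_cons, hbe, Nat.odd_iff] at he
            | cons _ _ => simp [Walk.length_cons] at hlen
        · refine ⟨u, Walk.cons h p, ?_, le_refl _⟩
          exact (Walk.cons_isCycle_iff p h).mpr ⟨hpath, hs⟩
    · -- some vertex repeats in the interior: split into two shorter closed walks
      obtain ⟨x, hdup⟩ := List.exists_duplicate_iff_not_nodup.mpr hnd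
      have hcnt : 2 ≤ w.support.tail.count x := List.duplicate_iff_two_le_count.mp hdup
      have hx : x ∈ w.support := by
        apply List.mem_of_mem_tail
        rw [← List.count_pos_iff]; omega
      set r : G.Walk x x := w.rotate x hx with hr
      have hrlen : r.length = w.length := by
        have hspec := congrArg Walk.length (w.take_spec hx)
        rw [Walk.length_append] at hspec
        rw [hr]
        unfold Walk.rotate
        rw [Walk.length_append]
        omega
      have hrcnt : 2 ≤ r.support.tail.count x := by
        rw [((w.support_rotate x hx)).perm.count_eq]
        exact hcnt
      have hrecnt : r.edges.count e = w.edges.count e := (w.rotate_edges x hx).perm.count_eq e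
      cases hrr : r with
      | nil =>
        rw [hrr] at hrcnt; simp at hrcnt
      | @cons _ b _ hadj p =>
        have hpcnt : 2 ≤ p.support.count x := by
          rw [hrr, Walk.support_cons, List.tail_cons] at hrcnt
          exact hrcnt
        have hxp : x ∈ p.support := by rw [← List.count_pos_iff]; omega
        set t := p.takeUntil x hxp with ht
        set d := p.dropUntil x hxp with hd
        have hspec : t.append d = p := p.take_spec hxp
        have hplen : t.length + d.length = p.length := by
          rw [← Walk.length_append, hspec]
        -- d is nontrivial
        have hdpos : 1 ≤ d.length := by
          by_contra hcon
          push_neg at hcon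
          have hd0 : d.length = 0 := by omega
          have : d.support.length = 1 := by rw [Walk.length_support, hd0]
          have hdt : d.support.tail = [] := by
            cases hds : d.support with
            | nil => simp
            | cons a l => rw [hds] at this; simp at this; simp [this]
          have hcs : p.support.count x = t.support.count x + d.support.tail.count x := by
            rw [← hspec, Walk.support_append, List.count_append]
          rw [hdt] at hcs
          simp at hcs
          rw [p.count_support_takeUntil_eq_one hxp] at hcs
          omega
        have hredges : r.edges = (Walk.cons hadj t).edges ++ d.edges := by
          rw [hrr, Walk.edges_cons, ← hspec, Walk.edges_append]
          simp
        have hsum : r.edges.count e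
            = (Walk.cons hadj t).edges.count e + d.edges.count e := by
          rw [hredges, List.count_append]
        have hodd : Odd ((Walk.cons hadj t).edges.count e) ∨ Odd (d.edges.count e) := by
          rw [hrecnt] at hsum
          rcases Nat.even_or_odd ((Walk.cons hadj t).edges.count e) with h1 | h1
          · right
            rcases Nat.even_or_odd (d.edges.count e) with h2 | h2
            · exfalso
              have : Even (w.edges.count e) := by rw [hsum]; exact h1.add h2
              exact (Nat.not_even_iff_odd.mpr he) this
            · exact h2
          · left; exact h1
        have hrlen' : p.length + 1 = w.length := by
          rw [← hrlen, hrr, Walk.length_cons]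
        rcases hodd with h1 | h1
        · have hlen1 : (Walk.cons hadj t).length ≤ n := by
            rw [Walk.length_cons]
            omega
          obtain ⟨v, c, hc, hcl⟩ := ih x (Walk.cons hadj t) hlen1 e h1
          refine ⟨v, c, hc, ?_⟩
          rw [Walk.length_cons] at hcl
          omega
        · have hlen2 : d.length ≤ n := by omega
          obtain ⟨v, c, hc, hcl⟩ := ih x d hlen2 e h1
          exact ⟨v, c, hc, by omega⟩

theorem stmt5 {V : Type*} [DecidableEq V] (G : SimpleGraph V) :
    (∀ (u : V) (w : G.Walk u u) (e : Sym2 V), Odd (w.edges.count e) →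
      ∃ (v : V) (c : G.Walk v v), c.IsCycle ∧ c.length ≤ w.length) ∧
    (∀ ℓ : ℕ, (∀ ⦃v : V⦄ (c : G.Walk v v), c.IsCycle → ℓ ≤ c.length) →
      ∀ (u : V) (w : G.Walk u u), w.length < ℓ →
        ∀ e : Sym2 V, Even (w.edges.count e)) := by
  constructor
  · intro u w e he
    exact aux_key w.length u w le_rfl e he
  · intro ℓ hgirth u w hw e
    rcases Nat.even_or_odd (w.edges.count e) with h | h
    · exact h
    · exfalso
      obtain ⟨v, c, hc, hcl⟩ := aux_key w.length u w le_rfl e h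
      have := hgirth c hc
      omega
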